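/- arXiv:1802.01847 — 2 statements merged into one kernel-verified Lean document; each statement's English description precedes it below -/
import Mathlib

section
/- Let {a_n} ⊂ ℕ with a_n = o(n), and let {π(n)} ⊂ (0,1), {v(n)} ⊂ (0,∞) with v(n) = o(n), v(n) → ∞, and nπ(n) ∼ v(n) (ratio tending to 1). Then the sequence {Bin(n - a_n, π(n))/v(n)} satisfies a large deviation principle on ℝ with speed v(n) and rate function H, where H(x) = 1 - x + x log x for x > 0, H(0) = 1, H(x) = +∞ for x < 0. That is, for every open set O ⊆ ℝ, liminf (1/v(n)) log P(Bin(n-a_n,π(n))/v(n) ∈ O) ≥ -inf_{x∈O} H(x), and for every closed set C, limsup (1/v(n)) log P(Bin(n-a_n,π(n))/v(n) ∈ C) ≤ -inf_{x∈C} H(x). -/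
open Filter
open scoped ENNReal

/-- The probability that a `Bin(m,p)` random variable equals `i`. -/
noncomputable def binomialP (m : ℕ) (p : ℝ) (i : ℕ) : ℝ :=
  (m.choose i : ℝ) * p ^ i * (1 - p) ^ (m - i)

/-- `P(Bin(m,p)/c ∈ S)`. -/
noncomputable def binomProbIn (m : ℕ) (p : ℝ) (c : ℝ) (S : Set ℝ) : ℝ :=
  ∑ i ∈ Finset.range (m + 1), S.indicator (fun _ => binomialP m p i) ((i : ℝ) / c)

/-- The rate function `H`, with `H x = 1 - x + x log x` for `x ≥ 0`
(so `H 0 = 1`, as `Real.log 0 = 0`) and `H x = +∞` for `x < 0`. -/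
noncomputable def Hrate : ℝ → ℝ≥0∞ := fun x =>
  if x < 0 then ⊤ else ENNReal.ofReal (1 - x + x * Real.log x)

section Aux

open Finset Nat

/-- coercion `ℝ≥0∞ → EReal` preserves infima. -/
lemma coe_ennreal_iInf' {ι : Sort*} (f : ι → ℝ≥0∞) :
    ((⨅ i, f i : ℝ≥0∞) : EReal) = ⨅ i, (f i : EReal) :=
  Monotone.map_iInf_of_continuousAt (continuous_coe_ennreal_ereal.continuousAt)
    EReal.coe_ennreal_strictMono.monotone rfl

lemma Hnonneg {x : ℝ} (hx : 0 ≤ x) : 0 ≤ 1 - x + x * Real.log x := by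
  rcases eq_or_lt_of_le hx with h | h
  · simp [← h]
  · have h1 : Real.log x⁻¹ ≤ x⁻¹ - 1 := Real.log_le_sub_one_of_pos (by positivity)
    rw [Real.log_inv] at h1
    have h2 : x * (-Real.log x) ≤ x * (x⁻¹ - 1) := by
      apply mul_le_mul_of_nonneg_left h1 hx
    rw [mul_sub, mul_inv_cancel₀ (ne_of_gt h)] at h2
    nlinarith

lemma coeHrate {x : ℝ} (hx : 0 ≤ x) :
    ((Hrate x : ℝ≥0∞) : EReal) = ((1 - x + x * Real.log x : ℝ) : EReal) := by
  unfold Hrate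
  rw [if_neg (not_lt.2 hx), EReal.coe_ennreal_ofReal, max_eq_left (Hnonneg hx)]

lemma ereal_term_le {vn c x : ℝ} (hv : 0 < vn) (hx : x ≤ Real.exp (vn * c)) :
    ((vn⁻¹ : ℝ) : EReal) * ENNReal.log (ENNReal.ofReal x) ≤ (c : EReal) := by
  have h1 : ENNReal.log (ENNReal.ofReal x) ≤ ((vn * c : ℝ) : EReal) := by
    calc ENNReal.log (ENNReal.ofReal x) ≤ ENNReal.log (ENNReal.ofReal (Real.exp (vn * c))) :=
          ENNReal.log_monotone (ENNReal.ofReal_le_ofReal hx)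
      _ = ((vn * c : ℝ) : EReal) := by
          rw [ENNReal.log_ofReal_of_pos (Real.exp_pos _), Real.log_exp]
  calc ((vn⁻¹ : ℝ) : EReal) * ENNReal.log (ENNReal.ofReal x)
      ≤ ((vn⁻¹ : ℝ) : EReal) * ((vn * c : ℝ) : EReal) :=
        mul_le_mul_of_nonneg_left h1 (by exact_mod_cast inv_nonneg.2 hv.le)
    _ = (c : EReal) := by
        rw [← EReal.coe_mul]; congr 1; field_simp

lemma ereal_term_ge {vn c x : ℝ} (hv : 0 < vn) (hx : Real.exp (vn * c) ≤ x) :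
    (c : EReal) ≤ ((vn⁻¹ : ℝ) : EReal) * ENNReal.log (ENNReal.ofReal x) := by
  have h1 : ((vn * c : ℝ) : EReal) ≤ ENNReal.log (ENNReal.ofReal x) := by
    calc ((vn * c : ℝ) : EReal)
        = ENNReal.log (ENNReal.ofReal (Real.exp (vn * c))) := by
          rw [ENNReal.log_ofReal_of_pos (Real.exp_pos _), Real.log_exp]
      _ ≤ ENNReal.log (ENNReal.ofReal x) := ENNReal.log_monotone (ENNReal.ofReal_le_ofReal hx)
  calc (c : EReal) = ((vn⁻¹ : ℝ) : EReal) * ((vn * c : ℝ) : EReal) := by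
        rw [← EReal.coe_mul]; norm_cast; field_simp
    _ ≤ ((vn⁻¹ : ℝ) : EReal) * ENNReal.log (ENNReal.ofReal x) :=
        mul_le_mul_of_nonneg_left h1 (by exact_mod_cast inv_nonneg.2 hv.le)

lemma limsup_le_of_tendsto' {u : ℕ → EReal} {c : ℕ → ℝ} {L : ℝ}
    (h : ∀ᶠ n in atTop, u n ≤ ((c n : ℝ) : EReal)) (hc : Tendsto c atTop (nhds L)) :
    limsup u atTop ≤ (L : EReal) := by
  have h2 : Tendsto (fun n => ((c n : ℝ) : EReal)) atTop (nhds (L : EReal)) :=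
    (continuous_coe_real_ereal.tendsto _).comp hc
  calc limsup u atTop ≤ limsup (fun n => ((c n : ℝ) : EReal)) atTop :=
        limsup_le_limsup h
    _ = (L : EReal) := h2.limsup_eq

lemma le_liminf_of_tendsto' {u : ℕ → EReal} {c : ℕ → ℝ} {L : ℝ}
    (h : ∀ᶠ n in atTop, ((c n : ℝ) : EReal) ≤ u n) (hc : Tendsto c atTop (nhds L)) :
    (L : EReal) ≤ liminf u atTop := by
  have h2 : Tendsto (fun n => ((c n : ℝ) : EReal)) atTop (nhds (L : EReal)) :=
    (continuous_coe_real_ereal.tendsto _).comp hc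
  calc (L : EReal) = liminf (fun n => ((c n : ℝ) : EReal)) atTop := h2.liminf_eq.symm
    _ ≤ liminf u atTop := liminf_le_liminf h

lemma binomialP_nonneg {m i : ℕ} {p : ℝ} (h0 : 0 ≤ p) (h1 : p ≤ 1) : 0 ≤ binomialP m p i := by
  have h2 : (0:ℝ) ≤ 1 - p := by linarith
  have h3 : (0:ℝ) ≤ (m.choose i : ℝ) := Nat.cast_nonneg _
  unfold binomialP
  positivity

lemma factorial_le_exp (n : ℕ) (hn : 1 ≤ n) :
    (n ! : ℝ) ≤ Real.exp 1 * n * ((n : ℝ) / Real.exp 1) ^ n := by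
  induction n with
  | zero => omega
  | succ k ih =>
    rcases Nat.lt_or_ge 1 (k+1) with h | h
    · have hk : 1 ≤ k := by omega
      have ihk := ih hk
      have hkpos : (0:ℝ) < k := by exact_mod_cast hk
      have hek : (0:ℝ) < Real.exp 1 := Real.exp_pos 1
      have key : Real.exp 1 * (k:ℝ) ^ (k+1) ≤ ((k:ℝ)+1) ^ (k+1) := by
        have h3 : (0:ℝ) < 1 - 1/((k:ℝ)+1) := by
          rw [sub_pos, div_lt_one (by positivity)]; linarith
        have h2 : (1:ℝ) - 1/((k:ℝ)+1) ≤ Real.exp (-(1/((k:ℝ)+1))) := by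
          have := Real.add_one_le_exp (-(1/((k:ℝ)+1))); linarith
        have h4 : Real.exp (1/((k:ℝ)+1)) ≤ (1 - 1/((k:ℝ)+1))⁻¹ := by
          rw [show Real.exp (1/((k:ℝ)+1)) = (Real.exp (-(1/((k:ℝ)+1))))⁻¹ by
            rw [Real.exp_neg, inv_inv]]
          exact inv_anti₀ h3 h2
        have h5 : (1 - 1/((k:ℝ)+1))⁻¹ = ((k:ℝ)+1)/k := by
          rw [show (1:ℝ) - 1/((k:ℝ)+1) = k/((k:ℝ)+1) by field_simp; ring]
          rw [inv_div]
        rw [h5] at h4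
        have h6 : (Real.exp (1/((k:ℝ)+1))) ^ (k+1) ≤ (((k:ℝ)+1)/k) ^ (k+1) :=
          pow_le_pow_left₀ (Real.exp_pos _).le h4 _
        rw [← Real.exp_nat_mul, show ((k+1 : ℕ):ℝ) * (1/((k:ℝ)+1)) = 1 by
          push_cast; field_simp] at h6
        rw [div_pow] at h6
        calc Real.exp 1 * (k:ℝ)^(k+1)
            ≤ (((k:ℝ)+1)^(k+1) / (k:ℝ)^(k+1)) * (k:ℝ)^(k+1) :=
              mul_le_mul_of_nonneg_right h6 (by positivity)
          _ = ((k:ℝ)+1)^(k+1) := by field_simp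
      have step : ((k+1)! : ℝ) ≤ ((k:ℝ)+1) * (Real.exp 1 * k * ((k:ℝ)/Real.exp 1)^k) := by
        rw [Nat.factorial_succ]
        push_cast
        exact mul_le_mul_of_nonneg_left ihk (by positivity)
      refine step.trans ?_
      push_cast
      calc ((k:ℝ)+1) * (Real.exp 1 * k * ((k:ℝ)/Real.exp 1)^k)
          = ((k:ℝ)+1) * (Real.exp 1 * (k:ℝ)^(k+1)) / Real.exp 1 ^ k := by
            rw [div_pow]; ring
        _ ≤ ((k:ℝ)+1) * (((k:ℝ)+1)^(k+1)) / Real.exp 1 ^ k := by gcongr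
        _ = Real.exp 1 * ((k:ℝ)+1) * (((k:ℝ)+1)/Real.exp 1) ^ (k+1) := by
            rw [div_pow, pow_succ (Real.exp 1)]
            field_simp
    · have hk1 : k = 0 := by omega
      subst hk1
      norm_num [Nat.factorial]

lemma binomial_mgf (m : ℕ) (p lam : ℝ) :
    ∑ i ∈ Finset.range (m+1), Real.exp (lam * i) * binomialP m p i
      = (p * Real.exp lam + (1 - p)) ^ m := by
  rw [add_pow]
  apply Finset.sum_congr rfl
  intro i hi
  unfold binomialP
  rw [mul_pow, ← Real.exp_nat_mul]
  ring_nf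

lemma chernoff_bound (m : ℕ) {p : ℝ} (lam s : ℝ) (hp : 0 < p) (hp1 : p < 1)
    (Q : ℕ → Prop) [DecidablePred Q] (hQ : ∀ i, Q i → 1 ≤ Real.exp (lam * i - lam * s)) :
    ∑ i ∈ Finset.range (m+1), (if Q i then binomialP m p i else 0)
      ≤ Real.exp ((m : ℝ) * p * (Real.exp lam - 1) - lam * s) := by
  have hPnn : ∀ i, 0 ≤ binomialP m p i := fun i => binomialP_nonneg hp.le hp1.le
  have step1 : ∑ i ∈ Finset.range (m+1), (if Q i then binomialP m p i else 0)
      ≤ ∑ i ∈ Finset.range (m+1), Real.exp (lam * i - lam * s) * binomialP m p i := by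
    apply Finset.sum_le_sum
    intro i _
    by_cases h : Q i
    · simp only [h, if_true]
      nth_rewrite 1 [← one_mul (binomialP m p i)]
      exact mul_le_mul_of_nonneg_right (hQ i h) (hPnn i)
    · simp only [h, if_false]
      exact mul_nonneg (Real.exp_pos _).le (hPnn i)
  have step2 : ∑ i ∈ Finset.range (m+1), Real.exp (lam * i - lam * s) * binomialP m p i
      = Real.exp (-(lam * s)) * (p * Real.exp lam + (1 - p)) ^ m := by
    rw [← binomial_mgf m p lam, Finset.mul_sum]
    apply Finset.sum_congr rfl
    intro i _
    rw [← mul_assoc, ← Real.exp_add]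
    ring_nf
  have step3 : (p * Real.exp lam + (1 - p)) ^ m ≤ Real.exp ((m:ℝ) * p * (Real.exp lam - 1)) := by
    have h1 : p * Real.exp lam + (1 - p) ≤ Real.exp (p * (Real.exp lam - 1)) := by
      have := Real.add_one_le_exp (p * (Real.exp lam - 1))
      nlinarith
    have h2 : (0:ℝ) ≤ p * Real.exp lam + (1 - p) := by
      have := Real.exp_pos lam
      nlinarith
    calc (p * Real.exp lam + (1 - p)) ^ m ≤ (Real.exp (p * (Real.exp lam - 1))) ^ m :=
          pow_le_pow_left₀ h2 h1 m
      _ = Real.exp ((m:ℝ) * p * (Real.exp lam - 1)) := by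
          rw [← Real.exp_nat_mul]; ring_nf
  calc ∑ i ∈ Finset.range (m+1), (if Q i then binomialP m p i else 0)
      ≤ Real.exp (-(lam * s)) * (p * Real.exp lam + (1 - p)) ^ m := step1.trans (le_of_eq step2)
    _ ≤ Real.exp (-(lam * s)) * Real.exp ((m:ℝ) * p * (Real.exp lam - 1)) :=
        mul_le_mul_of_nonneg_left step3 (Real.exp_pos _).le
    _ = Real.exp ((m:ℝ) * p * (Real.exp lam - 1) - lam * s) := by
        rw [← Real.exp_add]; ring_nf

lemma binomialP_sum (m : ℕ) (p : ℝ) :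
    ∑ i ∈ Finset.range (m+1), binomialP m p i = 1 := by
  have h := binomial_mgf m p 0
  simp only [Real.exp_zero, mul_zero, zero_mul, one_mul] at h
  rw [h]
  norm_num

lemma binomialP_lower (m i : ℕ) {p : ℝ} (hp : 0 < p) (hp1 : p < 1) (hi : 1 ≤ i) (him : i ≤ m) :
    Real.exp ((i:ℝ) * Real.log (((m + 1 - i : ℕ):ℝ) * p / i) + (i:ℝ) - 1 - Real.log i
      + (m:ℝ) * Real.log (1 - p)) ≤ binomialP m p i := by
  set w : ℝ := ((m + 1 - i : ℕ) : ℝ) with hw_def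
  have hw : (1:ℝ) ≤ w := by
    have h : 1 ≤ m + 1 - i := by omega
    rw [hw_def]
    exact_mod_cast h
  have hwpos : (0:ℝ) < w := lt_of_lt_of_le one_pos hw
  have hipos : (0:ℝ) < (i:ℝ) := by exact_mod_cast hi
  have h1p : (0:ℝ) < 1 - p := by linarith
  have hfact : (0:ℝ) < (i ! : ℝ) := by exact_mod_cast Nat.factorial_pos i
  have hexp : Real.exp ((i:ℝ) * Real.log (w * p / i) + (i:ℝ) - 1 - Real.log i
      + (m:ℝ) * Real.log (1 - p))
      = (w * p / i) ^ i * (Real.exp (i:ℝ) / (Real.exp 1 * i)) * (1 - p) ^ m := by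
    rw [show (i:ℝ) * Real.log (w * p / i) + (i:ℝ) - 1 - Real.log i + (m:ℝ) * Real.log (1 - p)
        = (i:ℝ) * Real.log (w * p / i) + ((i:ℝ) - 1 - Real.log i) + (m:ℝ) * Real.log (1 - p)
        by ring]
    rw [Real.exp_add, Real.exp_add]
    congr 1
    · congr 1
      · rw [Real.exp_nat_mul, Real.exp_log (by positivity)]
      · rw [show (i:ℝ) - 1 - Real.log i = (i:ℝ) - (1 + Real.log i) by ring,
          Real.exp_sub, Real.exp_add, Real.exp_log hipos]
    · rw [Real.exp_nat_mul, Real.exp_log h1p]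
  rw [hexp]
  have hfle : Real.exp (i:ℝ) / (Real.exp 1 * i) ≤ (i:ℝ) ^ i / (i ! : ℝ) := by
    have h := factorial_le_exp i hi
    rw [div_le_div_iff₀ (by positivity) hfact]
    calc Real.exp (i:ℝ) * (i ! : ℝ)
        ≤ Real.exp (i:ℝ) * (Real.exp 1 * i * ((i:ℝ) / Real.exp 1) ^ i) :=
          mul_le_mul_of_nonneg_left h (Real.exp_pos _).le
      _ = (i:ℝ) ^ i * (Real.exp 1 * (i:ℝ)) := by
          have hE : (Real.exp 1) ^ i = Real.exp (i:ℝ) := by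
            rw [← Real.exp_nat_mul, mul_one]
          rw [div_pow, ← hE]
          field_simp
  have hchoose : w ^ i / (i ! : ℝ) ≤ (m.choose i : ℝ) := by
    have h := Nat.pow_le_choose i m (α := ℝ)
    rw [hw_def]
    push_cast at h ⊢
    exact h
  have hpow1 : (1 - p) ^ m ≤ (1 - p) ^ (m - i) :=
    pow_le_pow_of_le_one h1p.le (by linarith) (Nat.sub_le m i)
  calc (w * p / i) ^ i * (Real.exp (i:ℝ) / (Real.exp 1 * i)) * (1 - p) ^ m
      ≤ (w * p / i) ^ i * ((i:ℝ) ^ i / (i ! : ℝ)) * (1 - p) ^ m := by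
        apply mul_le_mul_of_nonneg_right _ (by positivity)
        exact mul_le_mul_of_nonneg_left hfle (by positivity)
    _ = (w ^ i / (i ! : ℝ)) * p ^ i * (1 - p) ^ m := by
        rw [div_pow, mul_pow]
        field_simp
    _ ≤ (m.choose i : ℝ) * p ^ i * (1 - p) ^ m := by
        apply mul_le_mul_of_nonneg_right _ (by positivity)
        exact mul_le_mul_of_nonneg_right hchoose (by positivity)
    _ ≤ (m.choose i : ℝ) * p ^ i * (1 - p) ^ (m - i) := by
        apply mul_le_mul_of_nonneg_left hpow1 (by positivity)
    _ = binomialP m p i := rfl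

lemma binomProbIn_nonneg {m : ℕ} {p c : ℝ} (hp : 0 ≤ p) (hp1 : p ≤ 1) (S : Set ℝ) :
    0 ≤ binomProbIn m p c S := by
  apply Finset.sum_nonneg
  intro i _
  exact Set.indicator_nonneg (fun _ _ => binomialP_nonneg hp hp1) _

lemma binomProbIn_le_one {m : ℕ} {p c : ℝ} (hp : 0 ≤ p) (hp1 : p ≤ 1) (S : Set ℝ) :
    binomProbIn m p c S ≤ 1 := by
  calc binomProbIn m p c S ≤ ∑ i ∈ Finset.range (m + 1), binomialP m p i := by
        apply Finset.sum_le_sum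
        intro i _
        exact Set.indicator_le_self' (fun _ _ => binomialP_nonneg hp hp1) _
    _ = 1 := binomialP_sum m p

lemma single_le_binomProbIn {m i : ℕ} {p c : ℝ} {S : Set ℝ} (hp : 0 ≤ p) (hp1 : p ≤ 1)
    (him : i ≤ m) (hmem : ((i:ℝ)/c) ∈ S) : binomialP m p i ≤ binomProbIn m p c S := by
  have h : S.indicator (fun _ => binomialP m p i) ((i : ℝ) / c) = binomialP m p i :=
    Set.indicator_of_mem hmem _
  rw [← h]
  apply Finset.single_le_sum (f := fun j => S.indicator (fun _ => binomialP m p j) ((j : ℝ) / c))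
  · intro j _
    exact Set.indicator_nonneg (fun _ _ => binomialP_nonneg hp hp1) _
  · exact Finset.mem_range.2 (Nat.lt_succ_of_le him)

lemma binomProbIn_le_tails {m : ℕ} {p vv xlo xhi : ℝ} {S : Set ℝ} (hp : 0 ≤ p) (hp1 : p ≤ 1)
    (hsplit : ∀ i : ℕ, i ≤ m → ((i:ℝ)/vv) ∈ S → (i:ℝ) ≤ xlo * vv ∨ xhi * vv ≤ (i:ℝ)) :
    binomProbIn m p vv S ≤
      (∑ i ∈ Finset.range (m+1), if (i:ℝ) ≤ xlo * vv then binomialP m p i else 0)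
      + ∑ i ∈ Finset.range (m+1), if xhi * vv ≤ (i:ℝ) then binomialP m p i else 0 := by
  rw [← Finset.sum_add_distrib]
  apply Finset.sum_le_sum
  intro i hi
  have hPnn : 0 ≤ binomialP m p i := binomialP_nonneg hp hp1
  have h1 : (0:ℝ) ≤ if (i:ℝ) ≤ xlo * vv then binomialP m p i else 0 := by positivity
  have h2 : (0:ℝ) ≤ if xhi * vv ≤ (i:ℝ) then binomialP m p i else 0 := by positivity
  by_cases hmem : ((i:ℝ)/vv) ∈ S
  · rw [Set.indicator_of_mem hmem]
    rcases hsplit i (Nat.lt_succ_iff.1 (Finset.mem_range.1 hi)) hmem with h | h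
    · rw [if_pos h]
      exact le_add_of_nonneg_right h2
    · rw [if_pos h]
      exact le_add_of_nonneg_left h1
  · rw [Set.indicator_of_notMem hmem]
    exact add_nonneg h1 h2

lemma tail_lower (m : ℕ → ℕ) (π v : ℕ → ℝ) (hπ : ∀ n, π n ∈ Set.Ioo (0:ℝ) 1)
    (hv : ∀ n, 0 < v n)
    (hmp : Tendsto (fun n => (m n : ℝ) * π n / v n) atTop (nhds 1))
    {xlo : ℝ} (h0 : 0 ≤ xlo) (h1 : xlo < 1) :
    ∃ aa : ℕ → ℝ, Tendsto aa atTop (nhds (-(1 - xlo + xlo * Real.log xlo))) ∧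
      ∀ n, (∑ i ∈ Finset.range (m n + 1),
          if (i:ℝ) ≤ xlo * v n then binomialP (m n) (π n) i else 0)
        ≤ Real.exp (v n * aa n) := by
  rcases eq_or_lt_of_le h0 with h00 | h0pos
  · refine ⟨fun n => -((m n : ℝ) * π n / v n), ?_, ?_⟩
    · rw [← h00]
      simp only [Real.log_zero, mul_zero, add_zero, sub_zero]
      exact hmp.neg
    · intro n
      rw [← h00, zero_mul]
      have key : (∑ i ∈ Finset.range (m n + 1),
          if (i:ℝ) ≤ 0 then binomialP (m n) (π n) i else 0) = binomialP (m n) (π n) 0 := by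
        rw [Finset.sum_eq_single 0]
        · norm_num
        · intro i _ hi0
          rw [if_neg]
          push_neg
          exact_mod_cast Nat.pos_of_ne_zero hi0
        · intro h; exact absurd (Finset.mem_range.2 (Nat.succ_pos _)) h
      rw [key]
      have hP0 : binomialP (m n) (π n) 0 = (1 - π n) ^ (m n) := by
        unfold binomialP; simp
      rw [hP0]
      have hb : 1 - π n ≤ Real.exp (-(π n)) := by
        have := Real.add_one_le_exp (-(π n)); linarith
      calc (1 - π n) ^ (m n) ≤ (Real.exp (-(π n))) ^ (m n) :=
            pow_le_pow_left₀ (by have := (hπ n).2; linarith) hb _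
        _ = Real.exp (v n * -((m n:ℝ) * π n / v n)) := by
            rw [← Real.exp_nat_mul]
            congr 1
            rw [mul_neg, mul_comm (v n), neg_mul, div_mul_cancel₀ _ (hv n).ne']
  · set lam := Real.log xlo with hlam
    have hlamneg : lam ≤ 0 := Real.log_nonpos h0 h1.le
    refine ⟨fun n => ((m n : ℝ) * π n / v n) * (xlo - 1) - lam * xlo, ?_, ?_⟩
    · have := (hmp.mul_const (xlo - 1)).sub (tendsto_const_nhds (x := lam * xlo))
      convert this using 2
      ring
    · intro n
      have hcher := chernoff_bound (m n) lam (xlo * v n) (hπ n).1 (hπ n).2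
        (fun i => (i:ℝ) ≤ xlo * v n) (fun i hQ => by
          apply Real.one_le_exp
          nlinarith)
      refine hcher.trans (le_of_eq ?_)
      congr 1
      rw [Real.exp_log h0pos]
      have hvn' : v n ≠ 0 := (hv n).ne'
      field_simp

lemma tail_upper (m : ℕ → ℕ) (π v : ℕ → ℝ) (hπ : ∀ n, π n ∈ Set.Ioo (0:ℝ) 1)
    (hv : ∀ n, 0 < v n)
    (hmp : Tendsto (fun n => (m n : ℝ) * π n / v n) atTop (nhds 1))
    {xhi : ℝ} (h1 : 1 < xhi) :
    ∃ bb : ℕ → ℝ, Tendsto bb atTop (nhds (-(1 - xhi + xhi * Real.log xhi))) ∧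
      ∀ n, (∑ i ∈ Finset.range (m n + 1),
          if xhi * v n ≤ (i:ℝ) then binomialP (m n) (π n) i else 0)
        ≤ Real.exp (v n * bb n) := by
  set lam := Real.log xhi with hlam
  have hlampos : 0 ≤ lam := (Real.log_pos h1).le
  have h0pos : (0:ℝ) < xhi := by linarith
  refine ⟨fun n => ((m n : ℝ) * π n / v n) * (xhi - 1) - lam * xhi, ?_, ?_⟩
  · have := (hmp.mul_const (xhi - 1)).sub (tendsto_const_nhds (x := lam * xhi))
    convert this using 2
    ring
  · intro n
    have hcher := chernoff_bound (m n) lam (xhi * v n) (hπ n).1 (hπ n).2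
      (fun i => xhi * v n ≤ (i:ℝ)) (fun i hQ => by
        apply Real.one_le_exp
        nlinarith)
    refine hcher.trans (le_of_eq ?_)
    congr 1
    rw [Real.exp_log h0pos]
    have hvn' : v n ≠ 0 := (hv n).ne'
    field_simp

lemma liminf_point (m : ℕ → ℕ) (π v : ℕ → ℝ) (hπ : ∀ n, π n ∈ Set.Ioo (0:ℝ) 1)
    (hv : ∀ n, 0 < v n)
    (hmp : Tendsto (fun n => (m n : ℝ) * π n / v n) atTop (nhds 1))
    (hvinf : Tendsto v atTop atTop)
    (hvm : Tendsto (fun n => v n / (m n : ℝ)) atTop (nhds 0))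
    (hm1 : ∀ᶠ n in atTop, 1 ≤ m n)
    (hπ0 : Tendsto π atTop (nhds 0))
    (hmlog : Tendsto (fun n => (m n:ℝ) * Real.log (1 - π n) / v n) atTop (nhds (-1)))
    {x : ℝ} (hx : 0 < x) :
    ∃ ii : ℕ → ℕ, ∃ cc : ℕ → ℝ,
      Tendsto cc atTop (nhds (-(1 - x + x * Real.log x))) ∧
      (∀ᶠ n in atTop, ii n ≤ m n ∧ |(ii n : ℝ)/v n - x| ≤ 1 / v n ∧
        Real.exp (v n * cc n) ≤ binomialP (m n) (π n) (ii n)) := by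
  set ii : ℕ → ℕ := fun n => ⌈x * v n⌉₊ with hii_def
  set cc : ℕ → ℝ := fun n => ((ii n:ℝ) * Real.log (((m n + 1 - ii n : ℕ):ℝ) * π n / ii n)
      + (ii n:ℝ) - 1 - Real.log (ii n) + (m n:ℝ) * Real.log (1 - π n)) / v n with hcc_def
  have hii1 : ∀ n, 1 ≤ ii n := fun n => Nat.one_le_ceil_iff.2 (mul_pos hx (hv n))
  have hiipos : ∀ n, (0:ℝ) < (ii n : ℝ) := fun n => by exact_mod_cast hii1 n
  have hile : ∀ n, x * v n ≤ (ii n : ℝ) := fun n => Nat.le_ceil _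
  have hiub : ∀ n, (ii n : ℝ) < x * v n + 1 := fun n => Nat.ceil_lt_add_one (mul_pos hx (hv n)).le
  have hlb : ∀ n, x ≤ (ii n : ℝ) / v n := fun n => (le_div_iff₀ (hv n)).2 (hile n)
  have hub : ∀ n, (ii n : ℝ) / v n ≤ x + 1 / v n := fun n => by
    rw [div_le_iff₀ (hv n), add_mul, one_div, inv_mul_cancel₀ (hv n).ne']
    exact (hiub n).le
  have hinvv : Tendsto (fun n => 1 / v n) atTop (nhds 0) := by
    exact (tendsto_inv_atTop_zero.comp hvinf).congr (fun n => by simp [one_div])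
  have F3 : Tendsto (fun n => (ii n : ℝ) / v n) atTop (nhds x) := by
    apply tendsto_of_tendsto_of_tendsto_of_le_of_le (g := fun _ => x)
      (h := fun n => x + 1 / v n) tendsto_const_nhds _ hlb hub
    simpa using (tendsto_const_nhds (x := x)).add hinvv
  have hevle : ∀ᶠ n in atTop, ii n ≤ m n := by
    filter_upwards [hvm.eventually (gt_mem_nhds (show (0:ℝ) < (x+1)⁻¹ by positivity)), hm1]
      with n h1 h2
    have hmpos : (0:ℝ) < (m n : ℝ) := by exact_mod_cast h2
    rw [Nat.ceil_le]
    rw [div_lt_iff₀ hmpos] at h1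
    have h3 : x * v n < x * ((x+1)⁻¹ * (m n:ℝ)) := mul_lt_mul_of_pos_left h1 hx
    have h4 : x * ((x+1)⁻¹ * (m n:ℝ)) ≤ (m n:ℝ) := by
      rw [← mul_assoc]
      nth_rewrite 2 [← one_mul ((m n:ℝ))]
      apply mul_le_mul_of_nonneg_right _ hmpos.le
      rw [← div_eq_mul_inv, div_le_one (by linarith)]
      linarith
    linarith
  have hii_top : Tendsto (fun n => (ii n : ℝ)) atTop atTop :=
    tendsto_atTop_mono hile (Tendsto.const_mul_atTop hx hvinf)
  have hlogdiv : Tendsto (fun y : ℝ => Real.log y / y) atTop (nhds 0) := by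
    have := Real.tendsto_pow_log_div_mul_add_atTop 1 0 1 one_ne_zero
    simpa using this
  have c4 : Tendsto (fun n => Real.log (ii n) / v n) atTop (nhds 0) := by
    have h := (hlogdiv.comp hii_top).mul F3
    rw [zero_mul] at h
    apply h.congr
    intro n
    simp only [Function.comp_apply]
    rw [_root_.div_mul_div_comm, mul_comm (Real.log _), mul_div_mul_left _ _
      (ne_of_gt (hiipos n))]
  have hπv0 : Tendsto (fun n => π n / v n) atTop (nhds 0) := by
    have := hπ0.mul hinvv
    rw [mul_zero] at this
    apply this.congr
    intro n
    rw [one_div, div_eq_mul_inv]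
  have hwpi : Tendsto (fun n => ((m n + 1 - ii n : ℕ):ℝ) * π n / (ii n : ℝ)) atTop
      (nhds (1 / x)) := by
    have hnum : Tendsto (fun n => ((m n + 1 - ii n : ℕ):ℝ) * π n / v n) atTop (nhds 1) := by
      have h := (hmp.add hπv0).sub (F3.mul hπ0)
      rw [add_zero, mul_zero, sub_zero] at h
      apply Tendsto.congr' _ h
      filter_upwards [hevle] with n hle
      have hcast : ((m n + 1 - ii n : ℕ):ℝ) = (m n : ℝ) + 1 - (ii n : ℝ) := by
        have : ii n ≤ m n + 1 := le_trans hle (Nat.le_succ _)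
        push_cast [this]
        ring
      rw [hcast]
      ring
    have h := hnum.div F3 (ne_of_gt hx)
    apply Tendsto.congr _ h
    intro n
    rw [Pi.div_apply]
    have hvne : v n ≠ 0 := (hv n).ne'
    have hiine : (ii n : ℝ) ≠ 0 := (hiipos n).ne'
    rw [div_div_div_eq, mul_comm (v n), mul_div_mul_right _ _ hvne]
  have hlogwpi : Tendsto (fun n => Real.log (((m n + 1 - ii n : ℕ):ℝ) * π n / (ii n : ℝ)))
      atTop (nhds (-Real.log x)) := by
    have := hwpi.log (one_div_ne_zero (ne_of_gt hx))
    rwa [one_div, Real.log_inv] at this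
  have hcc : Tendsto cc atTop (nhds (-(1 - x + x * Real.log x))) := by
    have h := ((((F3.mul hlogwpi).add F3).sub hinvv).sub c4).add hmlog
    have hval : x * -Real.log x + x - 0 - 0 + -1 = -(1 - x + x * Real.log x) := by ring
    rw [hval] at h
    apply Tendsto.congr _ h
    intro n
    rw [hcc_def]
    ring
  refine ⟨ii, cc, hcc, ?_⟩
  filter_upwards [hevle] with n hle
  refine ⟨hle, ?_, ?_⟩
  · rw [abs_le]
    constructor
    · have := hlb n
      have h0 : 0 < 1 / v n := one_div_pos.2 (hv n)
      linarith
    · have := hub n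
      linarith
  · have hlow := binomialP_lower (m n) (ii n) (hπ n).1 (hπ n).2 (hii1 n) hle
    refine le_trans (le_of_eq ?_) hlow
    congr 1
    rw [hcc_def]
    rw [mul_comm, div_mul_cancel₀ _ (hv n).ne']

lemma exp_add_exp_le {vv aa bb : ℝ} (hv : 0 < vv) :
    Real.exp (vv * aa) + Real.exp (vv * bb)
      ≤ Real.exp (vv * (max aa bb + Real.log 2 / vv)) := by
  have h : vv * (max aa bb + Real.log 2 / vv) = vv * max aa bb + Real.log 2 := by
    field_simp
  rw [h, Real.exp_add, Real.exp_log two_pos]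
  have h1 : Real.exp (vv * aa) ≤ Real.exp (vv * max aa bb) :=
    Real.exp_le_exp.2 (mul_le_mul_of_nonneg_left (le_max_left _ _) hv.le)
  have h2 : Real.exp (vv * bb) ≤ Real.exp (vv * max aa bb) :=
    Real.exp_le_exp.2 (mul_le_mul_of_nonneg_left (le_max_right _ _) hv.le)
  linarith

end Aux

/-- LDP for `Bin(n - a_n, π(n)) / v(n)` with speed `v(n)` and
rate function `H`. -/
theorem stmt_11 (a : ℕ → ℕ) (π v : ℕ → ℝ)
    (ha : Tendsto (fun n => (a n : ℝ) / (n : ℝ)) atTop (nhds 0))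
    (hπ : ∀ n, π n ∈ Set.Ioo (0 : ℝ) 1)
    (hv : ∀ n, 0 < v n)
    (hvn : Tendsto (fun n => v n / (n : ℝ)) atTop (nhds 0))
    (hvinf : Tendsto v atTop atTop)
    (hπv : Tendsto (fun n : ℕ => (n : ℝ) * π n / v n) atTop (nhds 1)) :
    (∀ O : Set ℝ, IsOpen O →
      -((⨅ x ∈ O, Hrate x : ℝ≥0∞) : EReal) ≤
        liminf (fun n => (((v n)⁻¹ : ℝ) : EReal) *
          ENNReal.log (ENNReal.ofReal (binomProbIn (n - a n) (π n) (v n) O))) atTop) ∧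
    (∀ C : Set ℝ, IsClosed C →
      limsup (fun n => (((v n)⁻¹ : ℝ) : EReal) *
          ENNReal.log (ENNReal.ofReal (binomProbIn (n - a n) (π n) (v n) C))) atTop ≤
        -((⨅ x ∈ C, Hrate x : ℝ≥0∞) : EReal)) := by
  have hπ0 : ∀ n, 0 < π n := fun n => (hπ n).1
  have hπ1 : ∀ n, π n < 1 := fun n => (hπ n).2
  set M : ℕ → ℕ := fun n => n - a n with hM_def
  have han : ∀ᶠ n in atTop, ((M n : ℕ) : ℝ) = (n : ℝ) - (a n : ℝ) ∧ 1 ≤ n := by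
    filter_upwards [ha.eventually (gt_mem_nhds one_pos), eventually_ge_atTop 1] with n h2 h3
    have hn0 : (0:ℝ) < n := by exact_mod_cast h3
    have h4 : (a n : ℝ) < n := by rw [div_lt_one hn0] at h2; exact h2
    have halen : a n ≤ n := by exact_mod_cast h4.le
    refine ⟨?_, h3⟩
    show ((n - a n : ℕ) : ℝ) = (n : ℝ) - (a n : ℝ)
    push_cast [halen]
    ring
  have hmn : Tendsto (fun n => (M n : ℝ) / (n : ℝ)) atTop (nhds 1) := by
    have h := (tendsto_const_nhds (x := (1:ℝ))).sub ha
    rw [sub_zero] at h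
    apply Tendsto.congr' _ h
    filter_upwards [han] with n hn
    have hn0 : (0:ℝ) < n := by exact_mod_cast hn.2
    rw [hn.1, sub_div, div_self hn0.ne']
  have hmp : Tendsto (fun n => (M n : ℝ) * π n / v n) atTop (nhds 1) := by
    have h := hmn.mul hπv
    rw [one_mul] at h
    apply Tendsto.congr' _ h
    filter_upwards [han] with n hn
    have hn0 : (0:ℝ) < n := by exact_mod_cast hn.2
    have hn' : (n:ℝ) ≠ 0 := hn0.ne'
    have hv0 : v n ≠ 0 := (hv n).ne'
    field_simp
  have hπto0 : Tendsto π atTop (nhds 0) := by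
    have h := hπv.mul hvn
    rw [one_mul] at h
    apply Tendsto.congr' _ h
    filter_upwards [eventually_ge_atTop 1] with n hn
    have hn0 : (0:ℝ) < n := by exact_mod_cast hn
    have hn' : (n:ℝ) ≠ 0 := hn0.ne'
    have hv0 : v n ≠ 0 := (hv n).ne'
    field_simp
  have hlogq : Tendsto (fun n => Real.log (1 - π n) / π n) atTop (nhds (-1)) := by
    have hlo : Tendsto (fun n => -(1 - π n)⁻¹) atTop (nhds (-1)) := by
      have h : Tendsto (fun n => 1 - π n) atTop (nhds 1) := by
        have := (tendsto_const_nhds (x := (1:ℝ))).sub hπto0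
        rwa [sub_zero] at this
      have := (h.inv₀ one_ne_zero).neg
      rwa [inv_one] at this
    apply tendsto_of_tendsto_of_tendsto_of_le_of_le hlo tendsto_const_nhds
    · intro n
      show -(1 - π n)⁻¹ ≤ Real.log (1 - π n) / π n
      have h1p : (0:ℝ) < 1 - π n := by have := hπ1 n; linarith
      have h2 : Real.log (1 - π n)⁻¹ ≤ (1 - π n)⁻¹ - 1 :=
        Real.log_le_sub_one_of_pos (by positivity)
      rw [Real.log_inv] at h2
      rw [le_div_iff₀ (hπ0 n)]
      have h3 : -Real.log (1 - π n) * (1 - π n) ≤ π n := by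
        have h4 : (1 - π n)⁻¹ - 1 = π n / (1 - π n) := by field_simp; ring
        rw [h4] at h2
        rw [← le_div_iff₀ h1p]
        linarith
      have h5 : -(1 - π n)⁻¹ * π n = (-π n)/(1 - π n) := by field_simp
      rw [h5, div_le_iff₀ h1p]
      nlinarith [h3]
    · intro n
      show Real.log (1 - π n) / π n ≤ -1
      have h1p : (0:ℝ) < 1 - π n := by have := hπ1 n; linarith
      have h2 : Real.log (1 - π n) ≤ (1 - π n) - 1 := Real.log_le_sub_one_of_pos h1p
      rw [div_le_iff₀ (hπ0 n)]
      nlinarith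
  have hmlog : Tendsto (fun n => (M n : ℝ) * Real.log (1 - π n) / v n) atTop (nhds (-1)) := by
    have h := hmp.mul hlogq
    rw [one_mul] at h
    apply Tendsto.congr _ h
    intro n
    have hp0 : π n ≠ 0 := (hπ0 n).ne'
    have hv0 : v n ≠ 0 := (hv n).ne'
    field_simp
  have hvm : Tendsto (fun n => v n / (M n : ℝ)) atTop (nhds 0) := by
    have h := hvn.div hmn one_ne_zero
    rw [zero_div] at h
    apply Tendsto.congr' _ h
    filter_upwards [eventually_ge_atTop 1] with n hn
    have hn0 : (0:ℝ) < n := by exact_mod_cast hn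
    rw [Pi.div_apply]
    by_cases hM0 : (M n : ℝ) = 0
    · rw [hM0, zero_div, div_zero, div_zero]
    · field_simp
  have hm1 : ∀ᶠ n in atTop, 1 ≤ M n := by
    filter_upwards [hmn.eventually (lt_mem_nhds (show (1:ℝ)/2 < 1 by norm_num)),
      eventually_ge_atTop 1] with n h1 h2
    have hn0 : (0:ℝ) < n := by exact_mod_cast h2
    by_contra h
    push_neg at h
    have hM : M n = 0 := by omega
    rw [hM] at h1
    norm_num at h1
  constructor
  · -- open sets: lower bound
    intro O hO
    rw [EReal.neg_le, coe_ennreal_iInf']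
    refine le_iInf fun x => ?_
    rw [coe_ennreal_iInf']
    refine le_iInf fun hxO => ?_
    rcases lt_or_ge x 0 with hx | hx
    · rw [show Hrate x = ⊤ from if_pos hx]
      simp
    · rw [coeHrate hx, EReal.neg_le, ← EReal.coe_neg]
      rcases eq_or_lt_of_le hx with hx0 | hx0
      · -- x = 0
        subst hx0
        have hL : Tendsto (fun n => (M n : ℝ) * Real.log (1 - π n) / v n) atTop
            (nhds (-(1 - 0 + 0 * Real.log 0))) := by
          norm_num
          exact hmlog
        apply le_liminf_of_tendsto' _ hL
        apply Eventually.of_forall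
        intro n
        apply ereal_term_ge (hv n)
        have hexp : Real.exp (v n * ((M n : ℝ) * Real.log (1 - π n) / v n))
            = binomialP (M n) (π n) 0 := by
          have hP0 : binomialP (M n) (π n) 0 = (1 - π n) ^ (M n) := by
            unfold binomialP; simp
          rw [hP0, mul_comm (v n), div_mul_cancel₀ _ (hv n).ne']
          rw [← Real.exp_log (show (0:ℝ) < 1 - π n by have := hπ1 n; linarith),
            ← Real.exp_nat_mul]
          rw [Real.exp_log (show (0:ℝ) < 1 - π n by have := hπ1 n; linarith)]
        rw [hexp]
        apply single_le_binomProbIn (hπ0 n).le (hπ1 n).le (Nat.zero_le _)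
        simpa using hxO
      · -- x > 0
        obtain ⟨ii, cc, hcc, hev⟩ := liminf_point M π v hπ hv hmp hvinf hvm hm1 hπto0 hmlog hx0
        obtain ⟨δ, hδ, hball⟩ := Metric.isOpen_iff.1 hO x hxO
        apply le_liminf_of_tendsto' _ hcc
        filter_upwards [hev, hvinf.eventually_gt_atTop (1/δ)] with n hn hvbig
        obtain ⟨hle, habs, hexp⟩ := hn
        apply ereal_term_ge (hv n)
        refine hexp.trans (single_le_binomProbIn (hπ0 n).le (hπ1 n).le hle ?_)
        apply hball
        rw [Metric.mem_ball, Real.dist_eq]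
        have h2 : 1 / v n < δ := by
          rw [div_lt_iff₀ (hv n)]
          rw [div_lt_iff₀ hδ] at hvbig
          nlinarith
        exact lt_of_le_of_lt habs h2
  · -- closed sets: upper bound
    intro C hC
    have hTle : ∀ n, (((v n)⁻¹ : ℝ) : EReal) *
        ENNReal.log (ENNReal.ofReal (binomProbIn (n - a n) (π n) (v n) C)) ≤ (((0:ℝ)) : EReal) := by
      intro n
      have h1 : ENNReal.log (ENNReal.ofReal (binomProbIn (n - a n) (π n) (v n) C)) ≤ 0 :=
        ENNReal.log_le_zero_iff.2 (ENNReal.ofReal_le_one.2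
          (binomProbIn_le_one (hπ0 n).le (hπ1 n).le C))
      calc (((v n)⁻¹ : ℝ) : EReal) *
          ENNReal.log (ENNReal.ofReal (binomProbIn (n - a n) (π n) (v n) C))
          ≤ (((v n)⁻¹ : ℝ) : EReal) * 0 :=
            mul_le_mul_of_nonneg_left h1 (by exact_mod_cast inv_nonneg.2 (hv n).le)
        _ = (((0:ℝ)) : EReal) := by rw [mul_zero]; rfl
    by_cases hr : (⨅ x ∈ C, Hrate x) = 0
    · rw [hr]
      have h := limsup_le_of_tendsto' (Eventually.of_forall hTle)
        (tendsto_const_nhds (x := (0:ℝ)))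
      simpa using h
    · by_cases hCneg : ∀ y ∈ C, y < 0
      · have hzero : ∀ n, binomProbIn (n - a n) (π n) (v n) C = 0 := by
          intro n
          apply Finset.sum_eq_zero
          intro i _
          apply Set.indicator_of_notMem
          intro hmem
          exact absurd (hCneg _ hmem) (not_lt.2 (div_nonneg (Nat.cast_nonneg i) (hv n).le))
        have heq : (fun n => (((v n)⁻¹ : ℝ) : EReal) *
            ENNReal.log (ENNReal.ofReal (binomProbIn (n - a n) (π n) (v n) C)))
            = fun _ => (⊥ : EReal) := funext fun n => by
          rw [hzero n, ENNReal.ofReal_zero, ENNReal.log_zero,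
            EReal.coe_mul_bot_of_pos (inv_pos.2 (hv n))]
        rw [heq, limsup_const]
        exact bot_le
      · push_neg at hCneg
        obtain ⟨y0, hy0C, hy0⟩ := hCneg
        suffices hS : ∃ cc : ℕ → ℝ, ∃ L : ℝ, Tendsto cc atTop (nhds L) ∧
            (∀ᶠ n in atTop, binomProbIn (n - a n) (π n) (v n) C ≤ Real.exp (v n * cc n)) ∧
            ((L : ℝ) : EReal) ≤ -((⨅ x ∈ C, Hrate x : ℝ≥0∞) : EReal) by
          obtain ⟨cc, L, hcc, hbd, hL⟩ := hS
          refine le_trans (limsup_le_of_tendsto' ?_ hcc) hL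
          filter_upwards [hbd] with n hb
          exact ereal_term_le (hv n) hb
        have hLo : (C ∩ Set.Icc 0 1).Nonempty → ∃ xlo : ℝ, ∃ aa : ℕ → ℝ,
            0 ≤ xlo ∧ (∀ y ∈ C, 0 ≤ y → y ≤ 1 → y ≤ xlo) ∧
            Tendsto aa atTop (nhds (-(1 - xlo + xlo * Real.log xlo))) ∧
            (∀ n, (∑ i ∈ Finset.range (M n + 1),
              if (i:ℝ) ≤ xlo * v n then binomialP (M n) (π n) i else 0)
              ≤ Real.exp (v n * aa n)) ∧
            ((-(1 - xlo + xlo * Real.log xlo) : ℝ) : EReal)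
              ≤ -((⨅ x ∈ C, Hrate x : ℝ≥0∞) : EReal) := by
          intro h0
          have hcl : IsClosed (C ∩ Set.Icc 0 1) := hC.inter isClosed_Icc
          have hbdd : BddAbove (C ∩ Set.Icc 0 1) := ⟨1, fun y hy => hy.2.2⟩
          set xlo := sSup (C ∩ Set.Icc 0 1) with hxlo
          have hmem : xlo ∈ C ∩ Set.Icc 0 1 := hcl.csSup_mem h0 hbdd
          have h0le : 0 ≤ xlo := hmem.2.1
          have hlt1 : xlo < 1 := by
            rcases lt_or_eq_of_le hmem.2.2 with h | h
            · exact h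
            · exfalso
              apply hr
              apply le_antisymm _ zero_le
              have h1 : Hrate xlo = 0 := by
                unfold Hrate
                rw [if_neg (not_lt.2 h0le), h]
                norm_num
              calc (⨅ x ∈ C, Hrate x) ≤ Hrate xlo := iInf₂_le _ hmem.1
                _ = 0 := h1
          obtain ⟨aa, haa, hbb⟩ := tail_lower M π v hπ hv hmp h0le hlt1
          refine ⟨xlo, aa, h0le, fun y hy h1 h2 => le_csSup hbdd ⟨hy, h1, h2⟩, haa, hbb, ?_⟩
          rw [EReal.coe_neg, ← coeHrate h0le]
          rw [EReal.neg_le_neg_iff]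
          exact EReal.coe_ennreal_le_coe_ennreal_iff.2 (iInf₂_le _ hmem.1)
        have hHi : (C ∩ Set.Ici 1).Nonempty → ∃ xhi : ℝ, ∃ bb : ℕ → ℝ,
            1 < xhi ∧ (∀ y ∈ C, 1 ≤ y → xhi ≤ y) ∧
            Tendsto bb atTop (nhds (-(1 - xhi + xhi * Real.log xhi))) ∧
            (∀ n, (∑ i ∈ Finset.range (M n + 1),
              if xhi * v n ≤ (i:ℝ) then binomialP (M n) (π n) i else 0)
              ≤ Real.exp (v n * bb n)) ∧
            ((-(1 - xhi + xhi * Real.log xhi) : ℝ) : EReal)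
              ≤ -((⨅ x ∈ C, Hrate x : ℝ≥0∞) : EReal) := by
          intro h0
          have hcl : IsClosed (C ∩ Set.Ici 1) := hC.inter isClosed_Ici
          have hbdd : BddBelow (C ∩ Set.Ici 1) := ⟨1, fun y hy => hy.2⟩
          set xhi := sInf (C ∩ Set.Ici 1) with hxhi
          have hmem : xhi ∈ C ∩ Set.Ici 1 := hcl.csInf_mem h0 hbdd
          have h1le : (1:ℝ) ≤ xhi := hmem.2
          have hgt1 : 1 < xhi := by
            rcases lt_or_eq_of_le h1le with h | h
            · exact h
            · exfalso
              apply hr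
              apply le_antisymm _ zero_le
              have h1 : Hrate xhi = 0 := by
                unfold Hrate
                rw [if_neg (not_lt.2 (by linarith)), ← h]
                norm_num
              calc (⨅ x ∈ C, Hrate x) ≤ Hrate xhi := iInf₂_le _ hmem.1
                _ = 0 := h1
          obtain ⟨bb, hbbT, hbbB⟩ := tail_upper M π v hπ hv hmp hgt1
          refine ⟨xhi, bb, hgt1, fun y hy h1 => csInf_le hbdd ⟨hy, h1⟩, hbbT, hbbB, ?_⟩
          rw [EReal.coe_neg, ← coeHrate (by linarith : (0:ℝ) ≤ xhi)]
          rw [EReal.neg_le_neg_iff]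
          exact EReal.coe_ennreal_le_coe_ennreal_iff.2 (iInf₂_le _ hmem.1)
        by_cases hC0 : (C ∩ Set.Icc 0 1).Nonempty
        · by_cases hC1 : (C ∩ Set.Ici 1).Nonempty
          · -- both tails present
            obtain ⟨xlo, aa, hxlo0, hxloP, haa, haaB, haaL⟩ := hLo hC0
            obtain ⟨xhi, bb, hxhi1, hxhiP, hbbT, hbbB, hbbL⟩ := hHi hC1
            refine ⟨fun n => max (aa n) (bb n) + Real.log 2 / v n,
              max (-(1 - xlo + xlo * Real.log xlo)) (-(1 - xhi + xhi * Real.log xhi)),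
              ?_, ?_, ?_⟩
            · have h := (haa.max hbbT).add
                ((tendsto_const_nhds (x := Real.log 2)).div_atTop hvinf)
              rw [add_zero] at h
              exact h
            · apply Eventually.of_forall
              intro n
              have hsplit : ∀ i : ℕ, i ≤ M n → ((i:ℝ)/v n) ∈ C →
                  (i:ℝ) ≤ xlo * v n ∨ xhi * v n ≤ (i:ℝ) := by
                intro i hi hmem
                have hy0 : (0:ℝ) ≤ (i:ℝ)/v n := div_nonneg (Nat.cast_nonneg i) (hv n).le
                rcases le_or_gt ((i:ℝ)/v n) 1 with h | h
                · left
                  have h2 := hxloP _ hmem hy0 h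
                  rw [div_le_iff₀ (hv n)] at h2
                  exact h2
                · right
                  have h2 := hxhiP _ hmem h.le
                  rw [le_div_iff₀ (hv n)] at h2
                  exact h2
              calc binomProbIn (n - a n) (π n) (v n) C
                  ≤ (∑ i ∈ Finset.range (M n + 1),
                      if (i:ℝ) ≤ xlo * v n then binomialP (M n) (π n) i else 0)
                    + ∑ i ∈ Finset.range (M n + 1),
                      if xhi * v n ≤ (i:ℝ) then binomialP (M n) (π n) i else 0 :=
                    binomProbIn_le_tails (hπ0 n).le (hπ1 n).le hsplit
                _ ≤ Real.exp (v n * aa n) + Real.exp (v n * bb n) :=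
                    add_le_add (haaB n) (hbbB n)
                _ ≤ Real.exp (v n * (max (aa n) (bb n) + Real.log 2 / v n)) :=
                    exp_add_exp_le (hv n)
            · rcases le_total (-(1 - xlo + xlo * Real.log xlo))
                (-(1 - xhi + xhi * Real.log xhi)) with h | h
              · rw [max_eq_right h]; exact hbbL
              · rw [max_eq_left h]; exact haaL
          · -- only lower tail
            obtain ⟨xlo, aa, hxlo0, hxloP, haa, haaB, haaL⟩ := hLo hC0
            refine ⟨aa, _, haa, ?_, haaL⟩
            apply Eventually.of_forall
            intro n
            have hsplit : ∀ i : ℕ, i ≤ M n → ((i:ℝ)/v n) ∈ C →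
                (i:ℝ) ≤ xlo * v n ∨ (((M n:ℝ)+1)/v n) * v n ≤ (i:ℝ) := by
              intro i hi hmem
              have hy0 : (0:ℝ) ≤ (i:ℝ)/v n := div_nonneg (Nat.cast_nonneg i) (hv n).le
              rcases le_or_gt ((i:ℝ)/v n) 1 with h | h
              · left
                have h2 := hxloP _ hmem hy0 h
                rw [div_le_iff₀ (hv n)] at h2
                exact h2
              · exact absurd ⟨hmem, h.le⟩ (fun hmem2 => hC1 ⟨_, hmem2⟩)
            have hzero2 : (∑ i ∈ Finset.range (M n + 1),
                if (((M n:ℝ)+1)/v n) * v n ≤ (i:ℝ) then binomialP (M n) (π n) i else 0)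
                = 0 := by
              apply Finset.sum_eq_zero
              intro i hi
              have h3 : ¬ (((M n:ℝ)+1)/v n) * v n ≤ (i:ℝ) := by
                rw [div_mul_cancel₀ _ (hv n).ne']
                push_neg
                have h4 : i < M n + 1 := Finset.mem_range.1 hi
                have h5 : (i:ℝ) < (M n:ℝ) + 1 := by exact_mod_cast h4
                linarith
              rw [if_neg h3]
            calc binomProbIn (n - a n) (π n) (v n) C
                ≤ (∑ i ∈ Finset.range (M n + 1),
                    if (i:ℝ) ≤ xlo * v n then binomialP (M n) (π n) i else 0)
                  + ∑ i ∈ Finset.range (M n + 1),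
                    if (((M n:ℝ)+1)/v n) * v n ≤ (i:ℝ) then binomialP (M n) (π n) i else 0 :=
                  binomProbIn_le_tails (hπ0 n).le (hπ1 n).le hsplit
              _ = ∑ i ∈ Finset.range (M n + 1),
                    if (i:ℝ) ≤ xlo * v n then binomialP (M n) (π n) i else 0 := by
                  rw [hzero2, add_zero]
              _ ≤ Real.exp (v n * aa n) := haaB n
        · by_cases hC1 : (C ∩ Set.Ici 1).Nonempty
          · -- only upper tail
            obtain ⟨xhi, bb, hxhi1, hxhiP, hbbT, hbbB, hbbL⟩ := hHi hC1
            refine ⟨bb, _, hbbT, ?_, hbbL⟩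
            apply Eventually.of_forall
            intro n
            have hsplit : ∀ i : ℕ, i ≤ M n → ((i:ℝ)/v n) ∈ C →
                (i:ℝ) ≤ (-1) * v n ∨ xhi * v n ≤ (i:ℝ) := by
              intro i hi hmem
              have hy0 : (0:ℝ) ≤ (i:ℝ)/v n := div_nonneg (Nat.cast_nonneg i) (hv n).le
              rcases le_or_gt ((i:ℝ)/v n) 1 with h | h
              · exact absurd ⟨hmem, hy0, h⟩ (fun hmem2 => hC0 ⟨_, hmem2⟩)
              · right
                have h2 := hxhiP _ hmem h.le
                rw [le_div_iff₀ (hv n)] at h2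
                exact h2
            have hzero2 : (∑ i ∈ Finset.range (M n + 1),
                if (i:ℝ) ≤ (-1) * v n then binomialP (M n) (π n) i else 0) = 0 := by
              apply Finset.sum_eq_zero
              intro i hi
              have h3 : ¬ (i:ℝ) ≤ (-1) * v n := by
                push_neg
                have := hv n
                have h4 : (0:ℝ) ≤ (i:ℝ) := Nat.cast_nonneg i
                nlinarith
              rw [if_neg h3]
            calc binomProbIn (n - a n) (π n) (v n) C
                ≤ (∑ i ∈ Finset.range (M n + 1),
                    if (i:ℝ) ≤ (-1) * v n then binomialP (M n) (π n) i else 0)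
                  + ∑ i ∈ Finset.range (M n + 1),
                    if xhi * v n ≤ (i:ℝ) then binomialP (M n) (π n) i else 0 :=
                  binomProbIn_le_tails (hπ0 n).le (hπ1 n).le hsplit
              _ = ∑ i ∈ Finset.range (M n + 1),
                    if xhi * v n ≤ (i:ℝ) then binomialP (M n) (π n) i else 0 := by
                  rw [hzero2, zero_add]
              _ ≤ Real.exp (v n * bb n) := hbbB n
          · exfalso
            rcases le_total y0 1 with h | h
            · exact hC0 ⟨y0, hy0C, hy0, h⟩
            · exact hC1 ⟨y0, hy0C, h⟩
end

section
/- Let {q_n} ⊂ (0,1) with q_n m_n → ∞ where {m_n} ⊂ [1,∞). Then for every fixed k ∈ ℕ, 1 - P(Bin(⌊m_n⌋, q_n) ≥ k) = (1-q_n)^{m_n} · ((q_n m_n)^{k-1}/(k-1)!) · (1 + o(1)) as n → ∞. -/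
open Filter

/-- `P(Bin(m,p) ≥ k)`. -/
noncomputable def binomTail (m : ℕ) (p : ℝ) (k : ℕ) : ℝ :=
  ∑ i ∈ Finset.Icc k m, binomialP m p i

lemma binomialP_total (M : ℕ) (p : ℝ) :
    ∑ i ∈ Finset.range (M + 1), binomialP M p i = 1 := by
  have h := add_pow p (1 - p) M
  simp only [add_sub_cancel, one_pow] at h
  calc ∑ i ∈ Finset.range (M + 1), binomialP M p i
      = ∑ i ∈ Finset.range (M + 1), p ^ i * (1 - p) ^ (M - i) * ((M.choose i : ℕ) : ℝ) :=
        Finset.sum_congr rfl (fun i _ => by unfold binomialP; ring)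
    _ = 1 := h.symm

lemma one_sub_binomTail (M k : ℕ) (p : ℝ) (hkM : k ≤ M) :
    1 - binomTail M p k = ∑ i ∈ Finset.range k, binomialP M p i := by
  have h1 : ∑ i ∈ Finset.range (M + 1), binomialP M p i = 1 := binomialP_total M p
  have h2 : ∑ i ∈ Finset.Ico 0 k, binomialP M p i + ∑ i ∈ Finset.Ico k (M + 1), binomialP M p i
      = ∑ i ∈ Finset.Ico 0 (M + 1), binomialP M p i :=
    Finset.sum_Ico_consecutive _ (Nat.zero_le k) (Nat.le_succ_of_le hkM)
  rw [Finset.Ico_add_one_right_eq_Icc] at h2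
  simp only [← Finset.range_eq_Ico] at h2
  rw [h1] at h2
  unfold binomTail
  linarith

/-- if `q_n → 0` and `q_n m_n → ∞`, then for every fixed `k ≥ 1`,
`1 - P(Bin(⌊m_n⌋, q_n) ≥ k) = (1-q_n)^{m_n} ((q_n m_n)^{k-1}/(k-1)!)(1+o(1))`,
i.e. the ratio tends to `1`. -/
theorem stmt_19 (q m : ℕ → ℝ)
    (hq : ∀ n, q n ∈ Set.Ioo (0 : ℝ) 1) (hm : ∀ n, 1 ≤ m n)
    (hq0 : Tendsto q atTop (nhds 0))
    (hqm : Tendsto (fun n => q n * m n) atTop atTop)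
    (k : ℕ) (hk : 1 ≤ k) :
    Tendsto (fun n =>
        (1 - binomTail ⌊m n⌋₊ (q n) k) /
          ((1 - q n) ^ (m n) * ((q n * m n) ^ (k - 1) / ((k - 1).factorial : ℝ))))
      atTop (nhds 1) := by
  obtain ⟨j, rfl⟩ : ∃ j, k = j + 1 := ⟨k - 1, (Nat.succ_pred_eq_of_pos hk).symm⟩
  simp only [Nat.add_sub_cancel]
  -- basic positivity facts
  have hq0' : ∀ n, 0 < q n := fun n => (hq n).1
  have hq1 : ∀ n, q n < 1 := fun n => (hq n).2
  have hm0 : ∀ n, (0 : ℝ) < m n := fun n => lt_of_lt_of_le one_pos (hm n)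
  have h1q : ∀ n, (0 : ℝ) < 1 - q n := fun n => by linarith [hq1 n]
  have hqm0 : ∀ n, (0 : ℝ) < q n * m n := fun n => mul_pos (hq0' n) (hm0 n)
  set M : ℕ → ℕ := fun n => ⌊m n⌋₊ with hMdef
  set D : ℕ → ℝ := fun n =>
    (1 - q n) ^ (m n) * ((q n * m n) ^ j / (j.factorial : ℝ)) with hDdef
  have hD : ∀ n, 0 < D n := fun n => by
    apply mul_pos (Real.rpow_pos_of_pos (h1q n) _)
    exact div_pos (pow_pos (hqm0 n) j) (by positivity)
  have hMle : ∀ n, (M n : ℝ) ≤ m n := fun n => Nat.floor_le (hm0 n).le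
  have hMgt : ∀ n, m n - 1 < (M n : ℝ) := fun n => by
    have := Nat.lt_floor_add_one (m n); linarith
  have hmtop : Tendsto m atTop atTop := by
    apply tendsto_atTop_mono _ hqm
    intro n
    nlinarith [hq0' n, hq1 n, hm0 n]
  have hMtop : Tendsto M atTop atTop := tendsto_nat_floor_atTop.comp hmtop
  have hinv : Tendsto (fun n => 1 / m n) atTop (nhds 0) := by
    simpa [one_div, Function.comp_def] using tendsto_inv_atTop_zero.comp hmtop
  have hlog : Tendsto (fun n => Real.log (1 - q n)) atTop (nhds 0) := by
    have h1 : Tendsto (fun n => 1 - q n) atTop (nhds 1) := by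
      simpa using tendsto_const_nhds.sub hq0
    have := ((Real.continuousAt_log (by norm_num : (1:ℝ) ≠ 0)).tendsto).comp h1
    simpa [Function.comp_def] using this
  -- the "B" factor tends to 1
  have hB : ∀ i : ℕ, Tendsto (fun n => (1 - q n) ^ (M n - i) / (1 - q n) ^ (m n))
      atTop (nhds 1) := by
    intro i
    have key : ∀ n, (1 - q n) ^ (M n - i) / (1 - q n) ^ (m n)
        = Real.exp (Real.log (1 - q n) * (((M n - i : ℕ) : ℝ) - m n)) := by
      intro n
      rw [← Real.rpow_natCast (1 - q n) (M n - i), ← Real.rpow_sub (h1q n),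
        Real.rpow_def_of_pos (h1q n)]
    have harg : Tendsto (fun n => Real.log (1 - q n) * (((M n - i : ℕ) : ℝ) - m n))
        atTop (nhds 0) := by
      apply squeeze_zero_norm' (a := fun n => ‖Real.log (1 - q n)‖ * (i + 1))
      · filter_upwards [hMtop.eventually_ge_atTop i] with n hni
        rw [norm_mul]
        apply mul_le_mul_of_nonneg_left _ (norm_nonneg _)
        rw [Real.norm_eq_abs, abs_le]
        have hc : ((M n - i : ℕ) : ℝ) = (M n : ℝ) - i := by
          push_cast [Nat.cast_sub hni]; ring
        constructor
        · rw [hc]; have := hMgt n; push_cast; linarith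
        · rw [hc]; have := hMle n; push_cast; linarith
      · simpa using hlog.norm.mul_const ((i : ℝ) + 1)
    simp only [key]
    have := (Real.continuous_exp.tendsto 0).comp harg
    simpa [Function.comp_def] using this
  -- the descending-factorial factor tends to 1
  have hMm : Tendsto (fun n => (M n : ℝ) / m n) atTop (nhds 1) := by
    apply tendsto_of_tendsto_of_tendsto_of_le_of_le'
      (g := fun n => 1 - 1 / m n) (h := fun _ => (1 : ℝ))
    · simpa using tendsto_const_nhds.sub hinv
    · exact tendsto_const_nhds
    · filter_upwards with n
      rw [sub_div' (hm0 n).ne', div_le_div_iff₀ (hm0 n) (hm0 n)]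
      have := hMgt n
      nlinarith [hm0 n]
    · filter_upwards with n
      exact (div_le_one (hm0 n)).mpr (hMle n)
  have hMmc : ∀ c : ℝ, Tendsto (fun n => ((M n : ℝ) - c) / m n) atTop (nhds 1) := by
    intro c
    have : Tendsto (fun n => (M n : ℝ) / m n - c * (1 / m n)) atTop (nhds 1) := by
      simpa using hMm.sub (hinv.const_mul c)
    apply this.congr
    intro n
    rw [sub_div, mul_one_div]
  have hA : Tendsto (fun n => ((M n).descFactorial j : ℝ) / (m n) ^ j) atTop (nhds 1) := by
    apply tendsto_of_tendsto_of_tendsto_of_le_of_le'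
      (g := fun n => (((M n : ℝ) - j) / m n) ^ j) (h := fun n => ((M n : ℝ) / m n) ^ j)
    · simpa using (hMmc j).pow j
    · simpa using hMm.pow j
    · filter_upwards [hMtop.eventually_ge_atTop j] with n hnj
      rw [div_pow]
      gcongr
      · exact (pow_pos (hm0 n) j).le
      have hj0 : (0:ℝ) ≤ (M n : ℝ) - j := by
        rw [sub_nonneg]; exact_mod_cast hnj
      have h1 : ((M n + 1 - j : ℕ) : ℝ) ^ j ≤ ((M n).descFactorial j : ℝ) := by
        exact_mod_cast Nat.pow_sub_le_descFactorial (M n) j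
      have h2 : (M n : ℝ) - j ≤ ((M n + 1 - j : ℕ) : ℝ) := by
        rw [Nat.cast_sub (by omega)]
        push_cast
        linarith
      calc ((M n : ℝ) - j) ^ j ≤ ((M n + 1 - j : ℕ) : ℝ) ^ j := pow_le_pow_left₀ hj0 h2 j
        _ ≤ ((M n).descFactorial j : ℝ) := h1
    · filter_upwards with n
      rw [div_pow]
      gcongr
      · exact (pow_pos (hm0 n) j).le
      exact_mod_cast Nat.descFactorial_le_pow (M n) j
  -- per-term functions
  set F : ℕ → ℕ → ℝ := fun i n => binomialP (M n) (q n) i / D n with hFdef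
  have heq : ∀ i n, F i n =
      ((j.factorial : ℝ) * ((M n).choose i : ℝ) * (q n) ^ i / (q n * m n) ^ j) *
        ((1 - q n) ^ (M n - i) / (1 - q n) ^ (m n)) := by
    intro i n
    have h1 : ((1 - q n) ^ (m n)) ≠ 0 := (Real.rpow_pos_of_pos (h1q n) _).ne'
    have h2 : (q n * m n) ^ j ≠ 0 := pow_ne_zero _ (hqm0 n).ne'
    have h3 : (j.factorial : ℝ) ≠ 0 := Nat.cast_ne_zero.mpr j.factorial_ne_zero
    simp only [hFdef, hDdef, binomialP]
    field_simp
  have hlast : Tendsto (F j) atTop (nhds 1) := by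
    have heq2 : ∀ n, F j n =
        (((M n).descFactorial j : ℝ) / (m n) ^ j) *
          ((1 - q n) ^ (M n - j) / (1 - q n) ^ (m n)) := by
      intro n
      rw [heq j n]
      congr 1
      have hd : ((M n).descFactorial j : ℝ) = (j.factorial : ℝ) * ((M n).choose j : ℝ) := by
        exact_mod_cast Nat.descFactorial_eq_factorial_mul_choose (M n) j
      have hq' : (q n) ^ j ≠ 0 := pow_ne_zero _ (hq0' n).ne'
      have hm' : (m n) ^ j ≠ 0 := pow_ne_zero _ (hm0 n).ne'
      rw [hd, mul_pow]
      field_simp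
    rw [funext heq2]
    simpa using hA.mul (hB j)
  have hsmall : ∀ i, i < j → Tendsto (F i) atTop (nhds 0) := by
    intro i hij
    have hpos : ∀ n, 0 ≤ F i n := fun n => by
      apply div_nonneg _ (hD n).le
      unfold binomialP
      exact mul_nonneg (mul_nonneg (Nat.cast_nonneg _) (pow_nonneg (hq0' n).le i))
        (pow_nonneg (h1q n).le _)
    have hGlim : Tendsto (fun n =>
        ((j.factorial : ℝ) * ((q n * m n) ^ i / (q n * m n) ^ j)) *
          ((1 - q n) ^ (M n - i) / (1 - q n) ^ (m n))) atTop (nhds 0) := by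
      have h1 : Tendsto (fun n => (q n * m n) ^ i / (q n * m n) ^ j) atTop (nhds 0) := by
        have hpow : Tendsto (fun n => (q n * m n) ^ (j - i)) atTop atTop :=
          (tendsto_pow_atTop (by omega : j - i ≠ 0)).comp hqm
        apply hpow.inv_tendsto_atTop.congr
        intro n
        simp only [Pi.inv_apply]
        rw [inv_eq_one_div, div_eq_div_iff (pow_pos (hqm0 n) _).ne' (pow_pos (hqm0 n) _).ne',
          one_mul, ← pow_add]
        congr 1
        omega
      have h2 := (h1.const_mul (j.factorial : ℝ)).mul (hB i)
      simpa using h2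
    apply squeeze_zero' (Eventually.of_forall hpos) _ hGlim
    filter_upwards with n
    rw [heq i n]
    apply mul_le_mul_of_nonneg_right _
      (div_nonneg (pow_nonneg (h1q n).le _) (Real.rpow_pos_of_pos (h1q n) _).le)
    have hc : ((M n).choose i : ℝ) * q n ^ i ≤ (q n * m n) ^ i := by
      rw [mul_pow]
      have hc1 : ((M n).choose i : ℝ) ≤ (M n : ℝ) ^ i := by
        exact_mod_cast Nat.choose_le_pow (M n) i
      have hc2 : (M n : ℝ) ^ i ≤ (m n) ^ i := pow_le_pow_left₀ (Nat.cast_nonneg _) (hMle n) i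
      calc ((M n).choose i : ℝ) * q n ^ i ≤ (m n) ^ i * q n ^ i := by
            apply mul_le_mul_of_nonneg_right (hc1.trans hc2) (pow_nonneg (hq0' n).le i)
        _ = q n ^ i * m n ^ i := by ring
    rw [mul_div_assoc', div_le_div_iff_of_pos_right (pow_pos (hqm0 n) j)]
    calc (j.factorial : ℝ) * ((M n).choose i : ℝ) * q n ^ i
          = (j.factorial : ℝ) * (((M n).choose i : ℝ) * q n ^ i) := by ring
      _ ≤ (j.factorial : ℝ) * (q n * m n) ^ i :=
          mul_le_mul_of_nonneg_left hc (Nat.cast_nonneg _)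
  -- conclude
  have hsum : Tendsto (fun n => ∑ i ∈ Finset.range (j + 1), F i n) atTop
      (nhds (∑ i ∈ Finset.range (j + 1), if i = j then (1 : ℝ) else 0)) := by
    apply tendsto_finset_sum
    intro i hi
    rcases eq_or_lt_of_le (Nat.lt_succ_iff.mp (Finset.mem_range.mp hi)) with h | h
    · simpa [h] using hlast
    · simpa [Nat.ne_of_lt h] using hsmall i h
  have hsumval : (∑ i ∈ Finset.range (j + 1), if i = j then (1 : ℝ) else 0) = 1 := by
    simp
  rw [hsumval] at hsum
  apply hsum.congr'
  filter_upwards [hMtop.eventually_ge_atTop (j + 1)] with n hn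
  rw [one_sub_binomTail _ _ _ hn, Finset.sum_div]
end
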